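/- Every overring of a weakly replete Dedekind domain is weakly replete: if every subgroup of Pic(R) is generated by classes of nonzero prime ideals of R, then the same property holds for Pic(S) for any overring S of R. -/

import Mathlib

open scoped nonZeroDivisors

/-- A Dedekind domain `R` is weakly replete if every subgroup of its ideal class group
is generated by classes of nonzero prime ideals. -/
def WeaklyReplete (R : Type*) [CommRing R] [IsDomain R] [IsDedekindDomain R] : Prop :=
  ∀ H : Subgroup (ClassGroup R),
    H = Subgroup.closure {c : ClassGroup R | ∃ 𝔭 : (Ideal R)⁰,
      (𝔭 : Ideal R).IsPrime ∧ ClassGroup.mk0 𝔭 = c ∧ c ∈ H}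

section Overring

variable {R : Type*} [CommRing R] [IsDomain R] [IsDedekindDomain R]
  {K : Type*} [Field K] [Algebra R K] [IsFractionRing R K]
  {S : Subalgebra R K}

lemma OW.algebraMap_S_coe (r : R) : ((algebraMap R S r : S) : K) = algebraMap R K r :=
  S.val.commutes r

lemma OW.algebraMap_S_injective : Function.Injective (algebraMap R S) := by
  intro a b h
  apply IsFractionRing.injective R K
  rw [← OW.algebraMap_S_coe (S := S) a, ← OW.algebraMap_S_coe (S := S) b, h]

/-- Core lemma: if `x ∈ S` is not in the localization `R_𝔭`, then `𝔭` blows up in `S`. -/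
lemma OW.map_eq_top (𝔭 : Ideal R) (hp : 𝔭.IsPrime) (hp0 : 𝔭 ≠ ⊥) (x : K) (hxS : x ∈ S)
    (hx : ¬ ∃ a b : R, b ∉ 𝔭 ∧ x * algebraMap R K b = algebraMap R K a) :
    Ideal.map (algebraMap R S) 𝔭 = ⊤ := by
  classical
  set ι := algebraMap R K with hι
  -- the "denominator ideal" of x
  set D : Ideal R :=
    { carrier := {r : R | ∃ a : R, x * ι r = ι a}
      add_mem' := by
        rintro r s ⟨a, ha⟩ ⟨b, hb⟩
        exact ⟨a + b, by rw [map_add, mul_add, ha, hb, map_add]⟩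
      zero_mem' := ⟨0, by simp⟩
      smul_mem' := by
        rintro c r ⟨a, ha⟩
        refine ⟨c * a, ?_⟩
        rw [smul_eq_mul, map_mul, map_mul, ← mul_assoc x, mul_comm x (ι c), mul_assoc, ha] } with hDdef
  -- the "numerator ideal" x·D
  set E : Ideal R :=
    { carrier := {a : R | ∃ r ∈ D, x * ι r = ι a}
      add_mem' := by
        rintro a b ⟨r, hr, hra⟩ ⟨s, hs, hsb⟩
        exact ⟨r + s, D.add_mem hr hs, by rw [map_add, mul_add, hra, hsb, map_add]⟩
      zero_mem' := ⟨0, D.zero_mem, by simp⟩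
      smul_mem' := by
        rintro c a ⟨r, hr, hra⟩
        refine ⟨c * r, by simpa using D.smul_mem c hr, ?_⟩
        rw [smul_eq_mul, map_mul, map_mul, ← mul_assoc x, mul_comm x (ι c), mul_assoc, hra] } with hEdef
  have hrD : ∀ r : R, r ∈ D ↔ ∃ a : R, x * ι r = ι a := fun r => Iff.rfl
  have haE : ∀ a : R, a ∈ E ↔ ∃ r ∈ D, x * ι r = ι a := fun a => Iff.rfl
  have hD0 : D ≠ ⊥ := by
    obtain ⟨⟨n, d⟩, hnd⟩ := IsLocalization.surj R⁰ x
    refine Submodule.ne_bot_iff _ |>.mpr ⟨(d : R), ⟨n, ?_⟩, nonZeroDivisors.coe_ne_zero d⟩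
    simpa [Algebra.smul_def] using hnd
  have hDp : D ≤ 𝔭 := by
    intro r hr
    by_contra hrp
    obtain ⟨a, ha⟩ := (hrD r).mp hr
    exact hx ⟨a, r, hrp, ha⟩
  have key : ¬ E ≤ 𝔭 := by
    intro hEp
    have hp0' : (𝔭 : FractionalIdeal R⁰ K) ≠ 0 := by
      rwa [Ne, FractionalIdeal.coeIdeal_eq_zero]
    have hd0' : (D : FractionalIdeal R⁰ K) ≠ 0 := by
      rwa [Ne, FractionalIdeal.coeIdeal_eq_zero]
    have hdp : (D : FractionalIdeal R⁰ K) ≤ 𝔭 :=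
      (FractionalIdeal.coeIdeal_le_coeIdeal K).mpr hDp
    have hep : (E : FractionalIdeal R⁰ K) ≤ 𝔭 :=
      (FractionalIdeal.coeIdeal_le_coeIdeal K).mpr hEp
    have hinv : ((𝔭 : FractionalIdeal R⁰ K))⁻¹ * 𝔭 = 1 := by
      rw [mul_comm]; exact mul_inv_cancel₀ hp0'
    have hdinv : (D : FractionalIdeal R⁰ K) * (D : FractionalIdeal R⁰ K)⁻¹ = 1 :=
      mul_inv_cancel₀ hd0'
    -- spanSingleton x * D = E
    have hxd : FractionalIdeal.spanSingleton R⁰ x * (D : FractionalIdeal R⁰ K)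
        = (E : FractionalIdeal R⁰ K) := by
      apply le_antisymm
      · rw [FractionalIdeal.mul_le]
        intro u hu w hw
        obtain ⟨z, rfl⟩ := (FractionalIdeal.mem_spanSingleton _).mp hu
        obtain ⟨r, hr, rfl⟩ := (FractionalIdeal.mem_coeIdeal _).mp hw
        obtain ⟨a, ha⟩ := (hrD r).mp hr
        refine (FractionalIdeal.mem_coeIdeal _).mpr ⟨z * a, ?_, ?_⟩
        · refine (haE (z * a)).mpr ⟨z * r, by simpa using D.smul_mem z hr, ?_⟩
          rw [map_mul, map_mul, ← mul_assoc x, mul_comm x (ι z), mul_assoc, ha]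
        · rw [map_mul, ← ha, Algebra.smul_def]
          ring
      · intro y hy
        obtain ⟨a, ha, rfl⟩ := (FractionalIdeal.mem_coeIdeal _).mp hy
        obtain ⟨r, hr, hra⟩ := (haE a).mp ha
        rw [← hra]
        exact FractionalIdeal.mul_mem_mul (FractionalIdeal.mem_spanSingleton_self _ x)
          (FractionalIdeal.mem_coeIdeal_of_mem _ hr)
    -- 𝔭⁻¹ * D is integral
    have h1 : ((𝔭 : FractionalIdeal R⁰ K))⁻¹ * D ≤ 1 := by
      calc ((𝔭 : FractionalIdeal R⁰ K))⁻¹ * D ≤ ((𝔭 : FractionalIdeal R⁰ K))⁻¹ * 𝔭 :=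
            mul_right_mono hdp
        _ = 1 := hinv
    -- and contained in D
    have hD'D : ((𝔭 : FractionalIdeal R⁰ K))⁻¹ * D ≤ (D : FractionalIdeal R⁰ K) := by
      obtain ⟨D', hD'⟩ := FractionalIdeal.le_one_iff_exists_coeIdeal.mp h1
      rw [← hD']
      intro y hy
      obtain ⟨r, hr, rfl⟩ := (FractionalIdeal.mem_coeIdeal _).mp hy
      refine FractionalIdeal.mem_coeIdeal_of_mem _ ((hrD r).mpr ?_)
      have hmem : x * ι r ∈ FractionalIdeal.spanSingleton R⁰ x *
          (((𝔭 : FractionalIdeal R⁰ K))⁻¹ * D) := by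
        refine FractionalIdeal.mul_mem_mul (FractionalIdeal.mem_spanSingleton_self _ x) ?_
        rw [← hD']
        exact FractionalIdeal.mem_coeIdeal_of_mem _ hr
      have heq : FractionalIdeal.spanSingleton R⁰ x * (((𝔭 : FractionalIdeal R⁰ K))⁻¹ * D)
          = ((𝔭 : FractionalIdeal R⁰ K))⁻¹ * E := by
        rw [← hxd]; ring
      rw [heq] at hmem
      have hle : ((𝔭 : FractionalIdeal R⁰ K))⁻¹ * E ≤ 1 := by
        calc ((𝔭 : FractionalIdeal R⁰ K))⁻¹ * E ≤ ((𝔭 : FractionalIdeal R⁰ K))⁻¹ * 𝔭 :=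
              mul_right_mono hep
          _ = 1 := hinv
      obtain ⟨a, ha⟩ := (FractionalIdeal.mem_one_iff _).mp (hle hmem)
      exact ⟨a, ha.symm⟩
    -- hence 𝔭⁻¹ ≤ 1 and 𝔭 = ⊤, contradiction
    have hple : ((𝔭 : FractionalIdeal R⁰ K))⁻¹ ≤ 1 := by
      calc ((𝔭 : FractionalIdeal R⁰ K))⁻¹
          = ((𝔭 : FractionalIdeal R⁰ K))⁻¹ * D * (D : FractionalIdeal R⁰ K)⁻¹ := by
            rw [mul_assoc, hdinv, mul_one]
        _ ≤ (D : FractionalIdeal R⁰ K) * (D : FractionalIdeal R⁰ K)⁻¹ :=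
            mul_left_mono hD'D
        _ = 1 := hdinv
    have hpge : (1 : FractionalIdeal R⁰ K) ≤ 𝔭 := by
      calc (1 : FractionalIdeal R⁰ K) = ((𝔭 : FractionalIdeal R⁰ K))⁻¹ * 𝔭 := hinv.symm
        _ ≤ 1 * (𝔭 : FractionalIdeal R⁰ K) := mul_left_mono hple
        _ = (𝔭 : FractionalIdeal R⁰ K) := one_mul _
    have : (𝔭 : FractionalIdeal R⁰ K) = ((⊤ : Ideal R) : FractionalIdeal R⁰ K) := by
      rw [FractionalIdeal.coeIdeal_top]
      exact le_antisymm FractionalIdeal.coeIdeal_le_one hpge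
    exact hp.ne_top (FractionalIdeal.coeIdeal_inj.mp this)
  obtain ⟨a, haEmem, hap⟩ := SetLike.not_le_iff_exists.mp key
  obtain ⟨r, hr, hra⟩ := (haE a).mp haEmem
  have hσa : algebraMap R S a ∈ 𝔭.map (algebraMap R S) := by
    have : algebraMap R S a = (⟨x, hxS⟩ : S) * algebraMap R S r := by
      apply Subtype.ext
      rw [MulMemClass.coe_mul, OW.algebraMap_S_coe, OW.algebraMap_S_coe]
      exact hra.symm
    rw [this]
    exact Ideal.mul_mem_left _ _ (Ideal.mem_map_of_mem _ (hDp hr))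
  have hmax : 𝔭.IsMaximal := hp.isMaximal hp0
  obtain ⟨c, i, hi, hci⟩ := hmax.exists_inv hap
  rw [Ideal.eq_top_iff_one]
  have h1S : (1 : S) = algebraMap R S c * algebraMap R S a + algebraMap R S i := by
    rw [← map_mul, ← map_add, hci, map_one]
  rw [h1S]
  exact Ideal.add_mem _ (Ideal.mul_mem_left _ _ hσa) (Ideal.mem_map_of_mem _ hi)

lemma OW.comap_ne_bot (𝔮 : Ideal S) (hq0 : 𝔮 ≠ ⊥) : 𝔮.comap (algebraMap R S) ≠ ⊥ := by
  obtain ⟨y, hy, hy0⟩ := Submodule.ne_bot_iff _ |>.mp hq0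
  obtain ⟨⟨n, d⟩, hnd⟩ := IsLocalization.surj R⁰ (y : K)
  have hval : algebraMap R S n = y * algebraMap R S (d : R) := by
    apply Subtype.ext
    rw [MulMemClass.coe_mul, OW.algebraMap_S_coe, OW.algebraMap_S_coe]
    exact hnd.symm
  refine Submodule.ne_bot_iff _ |>.mpr ⟨n, Ideal.mem_comap.mpr ?_, ?_⟩
  · rw [hval]; exact Ideal.mul_mem_right _ _ hy
  · intro hn0
    apply hy0
    have : (y : K) * algebraMap R K (d : R) = 0 := by
      rw [hnd, hn0, map_zero]
    rcases mul_eq_zero.mp this with h | h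
    · exact Subtype.ext h
    · exact absurd h (IsFractionRing.to_map_ne_zero_of_mem_nonZeroDivisors d.2)

/-- every nonzero prime of the overring is the extension of its contraction -/
lemma OW.map_comap_eq (𝔮 : Ideal S) (hq : 𝔮.IsPrime) (hq0 : 𝔮 ≠ ⊥) :
    (𝔮.comap (algebraMap R S)).map (algebraMap R S) = 𝔮 := by
  set 𝔭 := 𝔮.comap (algebraMap R S) with h𝔭
  have hp : 𝔭.IsPrime := hq.comap _
  have hp0 : 𝔭 ≠ ⊥ := OW.comap_ne_bot 𝔮 hq0
  have hle : 𝔭.map (algebraMap R S) ≤ 𝔮 := Ideal.map_comap_le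
  refine le_antisymm hle ?_
  have hnt : 𝔭.map (algebraMap R S) ≠ ⊤ := fun h => hq.ne_top (top_le_iff.mp (h ▸ hle))
  intro y hy𝔮
  have hli : ∃ a b : R, b ∉ 𝔭 ∧ (y : K) * algebraMap R K b = algebraMap R K a := by
    by_contra hc
    exact hnt (OW.map_eq_top 𝔭 hp hp0 (y : K) y.2 hc)
  obtain ⟨a, b, hb, hab⟩ := hli
  have hya : algebraMap R S a = y * algebraMap R S b := by
    apply Subtype.ext
    rw [MulMemClass.coe_mul, OW.algebraMap_S_coe, OW.algebraMap_S_coe]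
    exact hab.symm
  have ha𝔭 : a ∈ 𝔭 := by
    rw [h𝔭, Ideal.mem_comap, hya]
    exact Ideal.mul_mem_right _ _ hy𝔮
  have hmax : 𝔭.IsMaximal := hp.isMaximal hp0
  obtain ⟨c, i, hi, hci⟩ := hmax.exists_inv hb
  have hyeq : y = algebraMap R S c * algebraMap R S a + y * algebraMap R S i := by
    have h1 : y = y * algebraMap R S (c * b + i) := by rw [hci, map_one, mul_one]
    conv_lhs => rw [h1]
    rw [map_add, map_mul, hya]
    ring
  rw [hyeq]
  exact Ideal.add_mem _ (Ideal.mul_mem_left _ _ (Ideal.mem_map_of_mem _ ha𝔭))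
    (Ideal.mul_mem_left _ _ (Ideal.mem_map_of_mem _ hi))

lemma OW.map_ne_bot (𝔭 : Ideal R) (hp0 : 𝔭 ≠ ⊥) : 𝔭.map (algebraMap R S) ≠ ⊥ := by
  obtain ⟨r, hr, hr0⟩ := Submodule.ne_bot_iff _ |>.mp hp0
  refine Submodule.ne_bot_iff _ |>.mpr ⟨algebraMap R S r, Ideal.mem_map_of_mem _ hr, fun h0 => ?_⟩
  exact hr0 (OW.algebraMap_S_injective (h0.trans (map_zero _).symm))

variable (S) in
/-- surviving primes extend to primes -/
lemma OW.map_prime_of_ne_top [IsDedekindDomain S] (𝔭 : Ideal R) (hp : 𝔭.IsPrime) (hp0 : 𝔭 ≠ ⊥)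
    (h : 𝔭.map (algebraMap R S) ≠ ⊤) : (𝔭.map (algebraMap R S)).IsPrime := by
  obtain ⟨𝔮, hqmax, hq⟩ := Ideal.exists_le_maximal _ h
  have hq0 : 𝔮 ≠ ⊥ := fun hbot => OW.map_ne_bot 𝔭 hp0 (le_bot_iff.mp (hbot ▸ hq))
  have hcom : 𝔮.comap (algebraMap R S) = 𝔭 := by
    have h1 : 𝔭 ≤ 𝔮.comap (algebraMap R S) :=
      le_trans Ideal.le_comap_map (Ideal.comap_mono hq)
    have hne : 𝔮.comap (algebraMap R S) ≠ ⊤ := by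
      intro htop
      exact hqmax.ne_top (Ideal.eq_top_iff_one _ |>.mpr (by
        have : (1 : R) ∈ 𝔮.comap (algebraMap R S) := htop ▸ trivial
        simpa [Ideal.mem_comap] using this))
    exact ((hp.isMaximal hp0).eq_of_le hne h1).symm
  have : 𝔭.map (algebraMap R S) = 𝔮 := by
    conv_lhs => rw [← hcom]
    exact OW.map_comap_eq 𝔮 hqmax.isPrime hq0
  rw [this]
  exact hqmax.isPrime

variable (R K S) in
/-- The pushforward of nonzero ideals. -/
noncomputable def OW.mapIdeal [IsDedekindDomain S] (I : (Ideal R)⁰) : (Ideal S)⁰ :=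
  ⟨(I : Ideal R).map (algebraMap R S), mem_nonZeroDivisors_iff_ne_zero.mpr (by
    simpa [Submodule.zero_eq_bot] using OW.map_ne_bot (I : Ideal R)
      (by simpa [Submodule.zero_eq_bot] using mem_nonZeroDivisors_iff_ne_zero.mp I.2))⟩

variable (R K S) in
lemma OW.mapIdeal_coe [IsDedekindDomain S] (I : (Ideal R)⁰) :
    (OW.mapIdeal R K S I : Ideal S) = (I : Ideal R).map (algebraMap R S) := rfl

variable (R K S) in
lemma OW.mk0_mapIdeal_welldef [IsDedekindDomain S] {I J : (Ideal R)⁰}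
    (h : ClassGroup.mk0 I = ClassGroup.mk0 J) :
    ClassGroup.mk0 (OW.mapIdeal R K S I) = ClassGroup.mk0 (OW.mapIdeal R K S J) := by
  rw [ClassGroup.mk0_eq_mk0_iff] at h ⊢
  obtain ⟨u, w, hu, hw, huw⟩ := h
  refine ⟨algebraMap R S u, algebraMap R S w, ?_, ?_, ?_⟩
  · intro h0; exact hu (OW.algebraMap_S_injective (h0.trans (map_zero _).symm))
  · intro h0; exact hw (OW.algebraMap_S_injective (h0.trans (map_zero _).symm))
  · have := congrArg (Ideal.map (algebraMap R S)) huw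
    rwa [Ideal.map_mul, Ideal.map_mul, Ideal.map_span, Ideal.map_span, Set.image_singleton,
      Set.image_singleton] at this

variable (R K S) in
noncomputable def OW.mapClFun [IsDedekindDomain S] (c : ClassGroup R) : ClassGroup S :=
  ClassGroup.mk0 (OW.mapIdeal R K S (ClassGroup.mk0_surjective c).choose)

variable (R K S) in
lemma OW.mapClFun_mk0 [IsDedekindDomain S] (I : (Ideal R)⁰) :
    OW.mapClFun R K S (ClassGroup.mk0 I) = ClassGroup.mk0 (OW.mapIdeal R K S I) :=
  OW.mk0_mapIdeal_welldef R K S ((ClassGroup.mk0_surjective (ClassGroup.mk0 I)).choose_spec)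

set_option maxHeartbeats 1000000 in
variable (R K S) in
/-- The pushforward on class groups. -/
noncomputable def OW.mapCl [IsDedekindDomain S] : ClassGroup R →* ClassGroup S where
  toFun := OW.mapClFun R K S
  map_one' := by
    have h1 : (1 : ClassGroup R) = ClassGroup.mk0 1 := (map_one _).symm
    have h2 : OW.mapIdeal R K S 1 = 1 := by
      apply Subtype.ext
      rw [OW.mapIdeal_coe]
      simp [Ideal.one_eq_top, Ideal.map_top]
    rw [h1, OW.mapClFun_mk0, h2, map_one]
  map_mul' := by
    intro c₁ c₂
    obtain ⟨I₁, rfl⟩ := ClassGroup.mk0_surjective c₁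
    obtain ⟨I₂, rfl⟩ := ClassGroup.mk0_surjective c₂
    have h2 : OW.mapIdeal R K S (I₁ * I₂) = OW.mapIdeal R K S I₁ * OW.mapIdeal R K S I₂ := by
      apply Subtype.ext
      rw [Submonoid.coe_mul, OW.mapIdeal_coe, Submonoid.coe_mul, Ideal.map_mul]
      rfl
    have hm : ClassGroup.mk0 I₁ * ClassGroup.mk0 I₂ = ClassGroup.mk0 (I₁ * I₂) :=
      (MonoidHom.map_mul ClassGroup.mk0 I₁ I₂).symm
    show OW.mapClFun R K S (ClassGroup.mk0 I₁ * ClassGroup.mk0 I₂)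
      = OW.mapClFun R K S (ClassGroup.mk0 I₁) * OW.mapClFun R K S (ClassGroup.mk0 I₂)
    rw [hm, OW.mapClFun_mk0, OW.mapClFun_mk0, OW.mapClFun_mk0, h2,
      MonoidHom.map_mul]

lemma OW.exists_map_eq [IsDedekindDomain S] (J : Ideal S) (hJ : J ≠ ⊥) :
    ∃ I : Ideal R, I ≠ ⊥ ∧ I.map (algebraMap R S) = J := by
  refine UniqueFactorizationMonoid.induction_on_prime (P := fun J : Ideal S =>
    J ≠ ⊥ → ∃ I : Ideal R, I ≠ ⊥ ∧ I.map (algebraMap R S) = J) J ?_ ?_ ?_ hJ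
  · intro h; exact absurd (Submodule.zero_eq_bot) h
  · intro x hx _
    exact ⟨⊤, top_ne_bot, by rw [Ideal.map_top, (Ideal.isUnit_iff.mp hx).symm]⟩
  · intro a p ha hp ih _
    have hp' : p.IsPrime := Ideal.isPrime_of_prime hp
    have hp0 : p ≠ ⊥ := by simpa [Submodule.zero_eq_bot] using hp.ne_zero
    obtain ⟨I, hI0, hIa⟩ := ih (by simpa [Submodule.zero_eq_bot] using ha)
    refine ⟨p.comap (algebraMap R S) * I, mul_ne_zero ?_ (by simpa [Submodule.zero_eq_bot]
      using hI0), ?_⟩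
    · simpa [Submodule.zero_eq_bot] using OW.comap_ne_bot p hp0
    · rw [Ideal.map_mul, hIa, OW.map_comap_eq p hp' hp0]

variable (R K S) in
lemma OW.mapCl_surjective [IsDedekindDomain S] :
    Function.Surjective (OW.mapCl R K S) := by
  intro c
  obtain ⟨J, rfl⟩ := ClassGroup.mk0_surjective c
  have hJ0 : (J : Ideal S) ≠ ⊥ := by
    simpa [Submodule.zero_eq_bot] using mem_nonZeroDivisors_iff_ne_zero.mp J.2
  obtain ⟨I, hI0, hIJ⟩ := OW.exists_map_eq (J : Ideal S) hJ0
  refine ⟨ClassGroup.mk0 ⟨I, mem_nonZeroDivisors_iff_ne_zero.mpr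
    (by simpa [Submodule.zero_eq_bot] using hI0)⟩, ?_⟩
  show OW.mapClFun R K S _ = _
  rw [OW.mapClFun_mk0]
  congr 1
  exact Subtype.ext (by rw [OW.mapIdeal_coe]; exact hIJ)

end Overring

/-- Every overring of a weakly replete Dedekind domain is weakly replete. -/
theorem overring_weaklyReplete (R : Type*) [CommRing R] [IsDomain R]
    [IsDedekindDomain R] (K : Type*) [Field K] [Algebra R K] [IsFractionRing R K]
    (hR : WeaklyReplete R) (S : Subalgebra R K) [IsDedekindDomain S] :
    WeaklyReplete S := by
  intro H'
  set T' := {c : ClassGroup S | ∃ 𝔮 : (Ideal S)⁰,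
    (𝔮 : Ideal S).IsPrime ∧ ClassGroup.mk0 𝔮 = c ∧ c ∈ H'} with hT'
  refine le_antisymm ?_ ((Subgroup.closure_le _).mpr ?_)
  swap
  · rintro c ⟨𝔮, h1, h2, h3⟩
    exact h3
  set f := OW.mapCl R K S with hf
  set H : Subgroup (ClassGroup R) := H'.comap f with hH
  set T := {c : ClassGroup R | ∃ 𝔭 : (Ideal R)⁰,
    (𝔭 : Ideal R).IsPrime ∧ ClassGroup.mk0 𝔭 = c ∧ c ∈ H} with hT
  have hsub : f '' T ⊆ ↑(Subgroup.closure T') := by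
    rintro _ ⟨c, ⟨𝔭, h𝔭prime, rfl, hcH⟩, rfl⟩
    have hfc : f (ClassGroup.mk0 𝔭) = ClassGroup.mk0 (OW.mapIdeal R K S 𝔭) :=
      OW.mapClFun_mk0 R K S 𝔭
    by_cases htop : ((𝔭 : Ideal R)).map (algebraMap R S) = ⊤
    · have : f (ClassGroup.mk0 𝔭) = 1 := by
        rw [hfc]
        have h1 : OW.mapIdeal R K S 𝔭 = 1 := by
          apply Subtype.ext
          simp only [OW.mapIdeal_coe, htop, Submonoid.coe_one, Ideal.one_eq_top]
        rw [h1, MonoidHom.map_one]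
      rw [this]
      exact Subgroup.one_mem _
    · apply Subgroup.subset_closure
      refine ⟨OW.mapIdeal R K S 𝔭, ?_, hfc.symm, hcH⟩
      rw [OW.mapIdeal_coe]
      exact OW.map_prime_of_ne_top S (𝔭 : Ideal R) h𝔭prime
        (by simpa [Submodule.zero_eq_bot] using mem_nonZeroDivisors_iff_ne_zero.mp 𝔭.2) htop
  intro c' hc'
  obtain ⟨c, rfl⟩ := OW.mapCl_surjective R K S c'
  have hcH : c ∈ H := hc'
  have hcT : c ∈ Subgroup.closure T := by rw [← hR H]; exact hcH
  have : f c ∈ (Subgroup.closure T).map f := Subgroup.mem_map_of_mem f hcT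
  rw [MonoidHom.map_closure] at this
  exact (Subgroup.closure_le _).mpr hsub this
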